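/- Let K be a number field with ring of integers O_K, let Γ be a finitely generated group, and let ρ: Γ → GL(n, K) be a representation. Then the following are equivalent: (i) there exists an O_K-submodule L of K^n that is finitely generated over O_K, spans K^n over K, and satisfies ρ(γ)·L = L for every γ ∈ Γ; (ii) for every finite place v of K (i.e., every nonzero prime ideal of O_K), the image of ρ(Γ) in GL(n, K_v) under the completion embedding K ↪ K_v is bounded, meaning there is a constant C such that every matrix entry of every ρ(γ), γ ∈ Γ, has v-adic absolute value at most C. -/

import Mathlib

open IsDedekindDomain NumberField
open scoped Multiplicative

local notation "ℤₘ₀" => WithZero (Multiplicative ℤ)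

set_option maxHeartbeats 1000000

namespace BassAux

open UniqueFactorizationMonoid

variable {K : Type*} [Field K] [NumberField K]

/-- A submodule of a finitely generated module over a Noetherian ring is finitely generated. -/
lemma fg_of_le {R M : Type*} [Ring R] [IsNoetherianRing R] [AddCommGroup M] [Module R M]
    {L N : Submodule R M} (h : L ≤ N) (hN : N.FG) : L.FG := by
  haveI := isNoetherian_of_fg_of_noetherian N hN
  have h1 : Submodule.map N.subtype (Submodule.comap N.subtype L) = L := by
    rw [Submodule.map_comap_subtype, inf_eq_right.mpr h]
  exact h1 ▸ (IsNoetherian.noetherian (Submodule.comap N.subtype L)).map _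

/-- An element of `K` whose valuation is at most one at every finite place is integral. -/
lemma mem_of_forall_val_le_one {x : K}
    (h : ∀ v : HeightOneSpectrum (𝓞 K), v.valuation K x ≤ 1) :
    ∃ r : 𝓞 K, algebraMap (𝓞 K) K r = x := by
  classical
  obtain ⟨⟨a, b⟩, hx⟩ := IsLocalization.surj (nonZeroDivisors (𝓞 K)) x
  have hb0 : (b : 𝓞 K) ≠ 0 := nonZeroDivisors.coe_ne_zero b
  have hbK : algebraMap (𝓞 K) K b ≠ 0 :=
    fun hc => hb0 (IsFractionRing.injective (𝓞 K) K (by simpa using hc))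
  by_cases ha0 : a = 0
  · refine ⟨0, ?_⟩
    have : x = 0 := by
      have h2 := hx
      rw [ha0, map_zero] at h2
      exact (mul_eq_zero.mp h2).resolve_right hbK
    simp [this]
  · have hspa : (Ideal.span {a} : Ideal (𝓞 K)) ≠ 0 := by
      simpa [Ideal.span_singleton_eq_bot] using ha0
    have hspb : (Ideal.span {(b : 𝓞 K)} : Ideal (𝓞 K)) ≠ 0 := by
      simpa [Ideal.span_singleton_eq_bot] using hb0
    have hdvd : (b : 𝓞 K) ∣ a := by
      rw [← Ideal.span_singleton_le_span_singleton, ← Ideal.dvd_iff_le]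
      rw [dvd_iff_normalizedFactors_le_normalizedFactors hspb hspa, Multiset.le_iff_count]
      intro p
      by_cases hp : p ∈ normalizedFactors (Ideal.span {(b : 𝓞 K)})
      · have hp_prime : Prime p := prime_of_normalized_factor p hp
        have hp_ne_bot : p ≠ ⊥ := by
          rintro rfl
          have hd : (0 : Ideal (𝓞 K)) ∣ Ideal.span {(b : 𝓞 K)} := by
            simpa [Ideal.zero_eq_bot] using dvd_of_mem_normalizedFactors hp
          exact hspb (zero_dvd_iff.mp hd)
        set v : HeightOneSpectrum (𝓞 K) := ⟨p, Ideal.isPrime_of_prime hp_prime, hp_ne_bot⟩ with hv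
        have hval : v.intValuationDef a ≤ v.intValuationDef b := by
          have h2 : v.valuation K ((algebraMap (𝓞 K) K) a)
              = v.valuation K x * v.valuation K ((algebraMap (𝓞 K) K) (b : 𝓞 K)) := by
            rw [← map_mul, hx]
          rw [v.valuation_of_algebraMap, v.valuation_of_algebraMap] at h2
          calc v.intValuation a = v.valuation K x * v.intValuation (b : 𝓞 K) := h2
            _ ≤ 1 * v.intValuation (b : 𝓞 K) := mul_le_mul_left (h v) _
            _ = v.intValuation (b : 𝓞 K) := one_mul _
        rw [v.intValuationDef_if_neg ha0, v.intValuationDef_if_neg hb0,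
          WithZero.exp_le_exp, neg_le_neg_iff, Int.ofNat_le] at hval
        rwa [← count_associates_factors_eq hspb (Ideal.isPrime_of_prime hp_prime) hp_ne_bot,
          ← count_associates_factors_eq hspa (Ideal.isPrime_of_prime hp_prime) hp_ne_bot]
      · simp [Multiset.count_eq_zero_of_notMem hp]
    obtain ⟨c, hc⟩ := hdvd
    refine ⟨c, ?_⟩
    have h2 := hx
    rw [hc, map_mul] at h2
    exact (mul_left_cancel₀ hbK (by rw [← h2]; ring)).symm

/-- Only finitely many finite places have valuation greater than one at a given element. -/
lemma finite_not_le_one (x : K) :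
    {v : HeightOneSpectrum (𝓞 K) | ¬ v.valuation K x ≤ 1}.Finite := by
  exact (HeightOneSpectrum.Support.finite (R := 𝓞 K) x).subset fun v hv => not_le.mp hv

/-- A common denominator clearing bounded valuations at finitely many places. -/
lemma exists_denominator (S : Finset (HeightOneSpectrum (𝓞 K)))
    (C : HeightOneSpectrum (𝓞 K) → ℤₘ₀) :
    ∃ d : 𝓞 K, d ≠ 0 ∧ ∀ v ∈ S, v.valuation K (algebraMap (𝓞 K) K d) * C v ≤ 1 := by
  classical
  have hk : ∀ v : HeightOneSpectrum (𝓞 K), ∃ k : ℕ,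
      (↑(Multiplicative.ofAdd (-(k : ℤ))) : ℤₘ₀) * C v ≤ 1 := by
    intro v
    by_cases hC : C v = 0
    · exact ⟨0, by simp [hC]⟩
    · obtain ⟨u, hu⟩ := WithZero.ne_zero_iff_exists.mp hC
      refine ⟨(Multiplicative.toAdd u).toNat, ?_⟩
      rw [← hu, ← WithZero.coe_mul, ← WithZero.coe_one, WithZero.coe_le_coe,
        ← Multiplicative.toAdd_le, toAdd_mul, toAdd_ofAdd, toAdd_one]
      omega
  choose k hk using hk
  set I : Ideal (𝓞 K) := ∏ v ∈ S, v.asIdeal ^ (k v) with hI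
  have hI0 : I ≠ 0 := by
    rw [hI]
    apply Finset.prod_ne_zero_iff.mpr
    intro v _
    exact pow_ne_zero _ v.ne_bot
  obtain ⟨d, hdI, hd0⟩ := Submodule.exists_mem_ne_zero_of_ne_bot hI0
  refine ⟨d, hd0, fun v hv => ?_⟩
  have hdvd : v.asIdeal ^ (k v) ∣ Ideal.span {d} := by
    have h1 : v.asIdeal ^ (k v) ∣ I := Finset.dvd_prod_of_mem _ hv
    have h2 : I ∣ Ideal.span {d} := Ideal.dvd_iff_le.mpr
      (by rwa [Ideal.span_le, Set.singleton_subset_iff])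
    exact h1.trans h2
  have hval : v.valuation K (algebraMap (𝓞 K) K d)
      ≤ (↑(Multiplicative.ofAdd (-(k v : ℤ))) : ℤₘ₀) := by
    rw [IsDedekindDomain.HeightOneSpectrum.valuation_of_algebraMap]
    exact (v.intValuation_le_pow_iff_dvd d (k v)).mpr hdvd
  calc v.valuation K (algebraMap (𝓞 K) K d) * C v
      ≤ (↑(Multiplicative.ofAdd (-(k v : ℤ))) : ℤₘ₀) * C v := mul_le_mul_left hval _
    _ ≤ 1 := hk v

/-- If the span over `K` of an `𝓞 K`-submodule is everything, some nonzero integral multiple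
of each standard basis vector belongs to it. -/
lemma exists_scaled_single_mem {n : ℕ} {L : Submodule (𝓞 K) (Fin n → K)}
    (hspan : Submodule.span K (L : Set (Fin n → K)) = ⊤) :
    ∃ a : 𝓞 K, a ≠ 0 ∧ ∀ j, algebraMap (𝓞 K) K a • (Pi.single j 1 : Fin n → K) ∈ L := by
  classical
  have hj : ∀ j : Fin n, ∃ a : 𝓞 K, a ≠ 0 ∧
      algebraMap (𝓞 K) K a • (Pi.single j 1 : Fin n → K) ∈ L := by
    intro j
    have hmem : (Pi.single j 1 : Fin n → K) ∈ Submodule.span K (L : Set (Fin n → K)) := by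
      rw [hspan]; trivial
    obtain ⟨m, f, g, hsum⟩ := Submodule.mem_span_set'.mp hmem
    obtain ⟨b, hb⟩ := IsLocalization.exist_integer_multiples_of_finset (nonZeroDivisors (𝓞 K))
      (Finset.image f Finset.univ)
    choose r hr using fun i : Fin m =>
      hb (f i) (Finset.mem_image_of_mem f (Finset.mem_univ i))
    refine ⟨b, nonZeroDivisors.coe_ne_zero b, ?_⟩
    have key : algebraMap (𝓞 K) K b • (Pi.single j 1 : Fin n → K)
        = ∑ i, r i • ((g i : Fin n → K)) := by
      rw [← hsum, Finset.smul_sum]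
      refine Finset.sum_congr rfl fun i _ => ?_
      have h1 : algebraMap (𝓞 K) K b * f i = algebraMap (𝓞 K) K (r i) := by
        rw [hr i, Algebra.smul_def]
      rw [smul_smul, h1, algebraMap_smul]
    rw [key]
    exact Submodule.sum_mem _ fun i _ => L.smul_mem (r i) (g i).2
  choose a ha hamem using hj
  refine ⟨∏ j, a j, Finset.prod_ne_zero_iff.mpr fun j _ => ha j, fun j => ?_⟩
  have key : algebraMap (𝓞 K) K (∏ i, a i) • (Pi.single j 1 : Fin n → K)
      = (∏ i ∈ Finset.univ.erase j, a i) •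
        (algebraMap (𝓞 K) K (a j) • (Pi.single j 1 : Fin n → K)) := by
    rw [algebraMap_smul, algebraMap_smul, smul_smul,
      ← Finset.mul_prod_erase Finset.univ a (Finset.mem_univ j), mul_comm]
  rw [key]
  exact L.smul_mem _ (hamem j)

/-- A finitely generated `𝓞 K`-submodule of `Kⁿ` admits a common denominator. -/
lemma exists_denominator_of_fg {n : ℕ} {L : Submodule (𝓞 K) (Fin n → K)} (hFG : L.FG) :
    ∃ b : 𝓞 K, b ≠ 0 ∧ ∀ x ∈ L, ∀ i, ∃ r : 𝓞 K,
      algebraMap (𝓞 K) K r = algebraMap (𝓞 K) K b * x i := by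
  classical
  obtain ⟨s, hs⟩ := hFG
  obtain ⟨b, hb⟩ := IsLocalization.exist_integer_multiples_of_finset (nonZeroDivisors (𝓞 K))
    (s.biUnion fun x => Finset.image x Finset.univ)
  refine ⟨b, nonZeroDivisors.coe_ne_zero b, ?_⟩
  intro x hx
  rw [← hs] at hx
  induction hx using Submodule.span_induction with
  | mem x h =>
    intro i
    obtain ⟨r, hr⟩ := hb (x i)
      (Finset.mem_biUnion.mpr ⟨x, h, Finset.mem_image_of_mem _ (Finset.mem_univ i)⟩)
    exact ⟨r, by rw [hr, Algebra.smul_def]⟩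
  | zero => intro i; exact ⟨0, by simp⟩
  | add x y hx hy ihx ihy =>
    intro i
    obtain ⟨r1, h1⟩ := ihx i
    obtain ⟨r2, h2⟩ := ihy i
    exact ⟨r1 + r2, by rw [map_add, h1, h2, Pi.add_apply, mul_add]⟩
  | smul c x hx ih =>
    intro i
    obtain ⟨r, h1⟩ := ih i
    refine ⟨c * r, ?_⟩
    rw [map_mul, h1, Pi.smul_apply, Algebra.smul_def]
    ring

end BassAux

/-- **Bass's characterization of integrality** for a representation
`ρ : Γ → GL(n, K)` of a finitely generated group `Γ` over a number field `K`:
`ρ(Γ)` stabilizes an `𝓞 K`-lattice in `Kⁿ` if and only if, for every finite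
place `v` of `K`, the image of `ρ(Γ)` in `GL(n, K_v)` is bounded (all matrix
entries have `v`-adic absolute value bounded by a constant). -/
theorem integral_iff_bounded_at_all_finite_places
    (K : Type*) [Field K] [NumberField K]
    (Γ : Type*) [Group Γ] (hΓ : Group.FG Γ)
    (n : ℕ) (ρ : Γ →* GL (Fin n) K) :
    (∃ L : Submodule (𝓞 K) (Fin n → K), L.FG ∧
        Submodule.span K (L : Set (Fin n → K)) = ⊤ ∧
        ∀ γ : Γ,
          L.map (((ρ γ : Matrix (Fin n) (Fin n) K).mulVecLin).restrictScalars (𝓞 K)) = L)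
      ↔
    (∀ v : HeightOneSpectrum (𝓞 K), ∃ C : WithZero (Multiplicative ℤ), ∀ γ : Γ, ∀ i j : Fin n,
        Valued.v (((ρ γ : Matrix (Fin n) (Fin n) K) i j : K) :
          v.adicCompletion K) ≤ C) := by
  classical
  constructor
  · rintro ⟨L, hFG, hspan, hinv⟩ v
    obtain ⟨a, ha0, ha⟩ := BassAux.exists_scaled_single_mem hspan
    obtain ⟨b, hb0, hb⟩ := BassAux.exists_denominator_of_fg hFG
    refine ⟨(v.valuation K (algebraMap (𝓞 K) K (a * b)))⁻¹, fun γ i j => ?_⟩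
    rw [IsDedekindDomain.HeightOneSpectrum.valuedAdicCompletion_eq_valuation']
    set M : Matrix (Fin n) (Fin n) K := (ρ γ : Matrix (Fin n) (Fin n) K) with hM
    have h2 : (M.mulVecLin.restrictScalars (𝓞 K))
        (algebraMap (𝓞 K) K a • (Pi.single j 1 : Fin n → K)) ∈ L := by
      rw [← hinv γ]
      exact Submodule.mem_map_of_mem (ha j)
    obtain ⟨r, hr⟩ := hb _ h2 i
    have hcoord : (M.mulVecLin.restrictScalars (𝓞 K))
        (algebraMap (𝓞 K) K a • (Pi.single j 1 : Fin n → K)) i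
        = algebraMap (𝓞 K) K a * M i j := by
      simp only [LinearMap.coe_restrictScalars, Matrix.mulVecLin_apply, Matrix.mulVec_smul,
        Pi.smul_apply, Matrix.mulVec_single, smul_eq_mul, mul_one, Pi.smul_apply, Matrix.col_apply,
        op_smul_eq_mul]
    rw [hcoord] at hr
    have habK : algebraMap (𝓞 K) K (a * b) ≠ 0 := fun hc =>
      (mul_ne_zero ha0 hb0) (IsFractionRing.injective (𝓞 K) K (by simpa using hc))
    have hne : v.valuation K (algebraMap (𝓞 K) K (a * b)) ≠ 0 :=
      (Valuation.ne_zero_iff _).mpr habK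
    have hmul : v.valuation K (M i j) * v.valuation K (algebraMap (𝓞 K) K (a * b)) ≤ 1 := by
      have heq : M i j * algebraMap (𝓞 K) K (a * b) = algebraMap (𝓞 K) K r := by
        rw [hr, map_mul]
        ring
      rw [← map_mul, heq]
      exact v.valuation_le_one r
    have hfin := mul_le_mul_left hmul (v.valuation K (algebraMap (𝓞 K) K (a * b)))⁻¹
    rwa [one_mul, mul_assoc, mul_inv_cancel₀ hne, mul_one] at hfin
  · intro h
    obtain ⟨T, hT⟩ := hΓ.1
    choose C hC using h
    have hC' : ∀ (v : HeightOneSpectrum (𝓞 K)) (γ : Γ) (i j : Fin n),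
        v.valuation K ((ρ γ : Matrix (Fin n) (Fin n) K) i j) ≤ C v := by
      intro v γ i j
      have hx := hC v γ i j
      rwa [IsDedekindDomain.HeightOneSpectrum.valuedAdicCompletion_eq_valuation'] at hx
    set T' : Finset Γ := T ∪ T.image (·⁻¹) with hT'
    set E : Finset K := T'.biUnion (fun t => Finset.image
      (fun p : Fin n × Fin n => (ρ t : Matrix (Fin n) (Fin n) K) p.1 p.2) Finset.univ) with hE
    have hSfin : (⋃ x ∈ (E : Set K),
        {v : HeightOneSpectrum (𝓞 K) | ¬ v.valuation K x ≤ 1}).Finite :=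
      Set.Finite.biUnion E.finite_toSet (fun x _ => BassAux.finite_not_le_one x)
    set S : Finset (HeightOneSpectrum (𝓞 K)) := hSfin.toFinset with hS
    have hout : ∀ v : HeightOneSpectrum (𝓞 K), v ∉ S → ∀ (γ : Γ) (i j : Fin n),
        v.valuation K ((ρ γ : Matrix (Fin n) (Fin n) K) i j) ≤ 1 := by
      intro v hv γ
      have hvE : ∀ x ∈ E, v.valuation K x ≤ 1 := by
        intro x hx
        by_contra hc
        exact hv (hSfin.mem_toFinset.mpr (Set.mem_biUnion hx hc))
      have hγ : γ ∈ (Subgroup.closure (T : Set Γ)).toSubmonoid := by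
        rw [hT]; trivial
      rw [Subgroup.closure_toSubmonoid] at hγ
      induction hγ using Submonoid.closure_induction with
      | mem x hx =>
        have hxT' : x ∈ T' := by
          rcases hx with hx | hx
          · exact Finset.mem_union_left _ hx
          · exact Finset.mem_union_right _
              (Finset.mem_image.mpr ⟨x⁻¹, hx, inv_inv x⟩)
        intro i j
        exact hvE _ (Finset.mem_biUnion.mpr
          ⟨x, hxT', Finset.mem_image.mpr ⟨(i, j), Finset.mem_univ _, rfl⟩⟩)
      | one =>
        intro i j
        rw [map_one ρ]
        by_cases hij : i = j
        · simp [Matrix.one_apply, hij]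
        · simp [Matrix.one_apply, hij]
      | mul x y hx hy ihx ihy =>
        intro i j
        rw [map_mul ρ]
        have hcoe : ((ρ x * ρ y : GL (Fin n) K) : Matrix (Fin n) (Fin n) K)
            = (ρ x : Matrix (Fin n) (Fin n) K) * (ρ y : Matrix (Fin n) (Fin n) K) :=
          Units.val_mul _ _
        rw [hcoe, Matrix.mul_apply]
        refine Valuation.map_sum_le _ fun k _ => ?_
        rw [map_mul]
        exact mul_le_one' (ihx i k) (ihy k j)
    obtain ⟨d, hd0, hdS⟩ := BassAux.exists_denominator S C
    have hint : ∀ (γ : Γ) (i j : Fin n), ∃ r : 𝓞 K,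
        algebraMap (𝓞 K) K r = algebraMap (𝓞 K) K d
          * (ρ γ : Matrix (Fin n) (Fin n) K) i j := by
      intro γ i j
      apply BassAux.mem_of_forall_val_le_one
      intro v
      rw [map_mul]
      by_cases hv : v ∈ S
      · calc v.valuation K (algebraMap (𝓞 K) K d)
              * v.valuation K ((ρ γ : Matrix (Fin n) (Fin n) K) i j)
            ≤ v.valuation K (algebraMap (𝓞 K) K d) * C v := mul_le_mul_right (hC' v γ i j) _
          _ ≤ 1 := hdS v hv
      · exact mul_le_one' (v.valuation_le_one d) (hout v hv γ i j)
    choose r hr using hint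
    set dK : K := algebraMap (𝓞 K) K d with hdK
    have hdK0 : dK ≠ 0 := by
      rw [hdK, Ne, IsFractionRing.to_map_eq_zero_iff]
      exact hd0
    set L0 : Submodule (𝓞 K) (Fin n → K) :=
      Submodule.span (𝓞 K) (Set.range fun j : Fin n => (Pi.single j 1 : Fin n → K)) with hL0
    set F : Γ → ((Fin n → K) →ₗ[𝓞 K] (Fin n → K)) :=
      fun γ => ((ρ γ : Matrix (Fin n) (Fin n) K).mulVecLin).restrictScalars (𝓞 K) with hF
    refine ⟨⨆ γ : Γ, Submodule.map (F γ) L0, ?_, ?_, ?_⟩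
    · -- finitely generated
      refine BassAux.fg_of_le ?_ (Submodule.fg_span
        (Set.finite_range fun i : Fin n => dK⁻¹ • (Pi.single i 1 : Fin n → K)))
      refine iSup_le fun γ => ?_
      rw [hL0, Submodule.map_span]
      refine Submodule.span_le.mpr ?_
      rintro _ ⟨_, ⟨j, rfl⟩, rfl⟩
      have hFx : (F γ) (Pi.single j 1 : Fin n → K)
          = fun i => (ρ γ : Matrix (Fin n) (Fin n) K) i j := by
        funext i'
        simp [hF, Matrix.mulVecLin_apply, Matrix.mulVec_single]
      have hsingle : ∀ (c : K) (i : Fin n),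
          c • (Pi.single i 1 : Fin n → K) = (Pi.single i c : Fin n → K) := by
        intro c i
        funext i'
        simp [Pi.single_apply, mul_ite]
      have hterm : ∀ i : Fin n, r γ i j • (dK⁻¹ • (Pi.single i 1 : Fin n → K))
          = (Pi.single i ((ρ γ : Matrix (Fin n) (Fin n) K) i j) : Fin n → K) := by
        intro i
        rw [← algebraMap_smul K (r γ i j) (dK⁻¹ • (Pi.single i 1 : Fin n → K)),
          smul_smul, hr γ i j, hsingle]
        congr 1
        rw [mul_comm dK _, mul_assoc, mul_inv_cancel₀ hdK0, mul_one]
      have hx : (F γ) (Pi.single j 1 : Fin n → K)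
          = ∑ i, r γ i j • (dK⁻¹ • (Pi.single i 1 : Fin n → K)) := by
        rw [hFx, Finset.sum_congr rfl fun i _ => hterm i, Finset.univ_sum_single]
      rw [hx]
      exact Submodule.sum_mem _ fun i _ =>
        Submodule.smul_mem _ _ (Submodule.subset_span ⟨i, rfl⟩)
    · -- spans over K
      rw [eq_top_iff]
      have h1 : L0 ≤ ⨆ γ : Γ, Submodule.map (F γ) L0 := by
        have h2 := le_iSup (fun γ : Γ => Submodule.map (F γ) L0) 1
        have h3 : F 1 = LinearMap.id := by
          rw [hF]
          simp only [map_one ρ, Matrix.GeneralLinearGroup.coe_one, Matrix.mulVecLin_one]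
          rfl
        rwa [h3, Submodule.map_id] at h2
      intro x _
      have hx : x ∈ Submodule.span K
          (Set.range fun j : Fin n => (Pi.single j 1 : Fin n → K)) := by
        have hxe : x = ∑ i, x i • (Pi.single i 1 : Fin n → K) := by
          funext i'
          simp [Finset.sum_apply, Pi.single_apply, mul_ite, Finset.sum_ite_eq']
        rw [hxe]
        exact Submodule.sum_mem _ fun i _ =>
          Submodule.smul_mem _ _ (Submodule.subset_span ⟨i, rfl⟩)
      refine Submodule.span_mono ?_ hx
      rintro _ ⟨j, rfl⟩
      exact h1 (Submodule.subset_span ⟨j, rfl⟩)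
    · -- invariance
      intro γ
      have hcomp : ∀ γ' : Γ, Submodule.map (F γ) (Submodule.map (F γ') L0)
          = Submodule.map (F (γ * γ')) L0 := by
        intro γ'
        rw [← Submodule.map_comp]
        congr 1
        simp only [hF]
        have hcoe : ((ρ (γ * γ') : GL (Fin n) K) : Matrix (Fin n) (Fin n) K)
            = (ρ γ : Matrix (Fin n) (Fin n) K) * (ρ γ' : Matrix (Fin n) (Fin n) K) := by
          rw [map_mul ρ]; exact Units.val_mul _ _
        rw [hcoe, Matrix.mulVecLin_mul]
        rfl
      calc Submodule.map (F γ) (⨆ γ' : Γ, Submodule.map (F γ') L0)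
          = ⨆ γ' : Γ, Submodule.map (F γ) (Submodule.map (F γ') L0) :=
            Submodule.map_iSup _ _
        _ = ⨆ γ' : Γ, Submodule.map (F (γ * γ')) L0 := iSup_congr hcomp
        _ = ⨆ γ'' : Γ, Submodule.map (F γ'') L0 :=
            (Equiv.mulLeft γ).surjective.iSup_comp fun γ'' => Submodule.map (F γ'') L0
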